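/- Let q = 2^n and let E = F_q(u) be a rational function field with an automorphism group Gal(E/K) cyclic of odd order q + 1, fixing a degree-2 place Q. If z ∈ L(Q) has ν_Q(z) = -1 (pole order exactly 1 at Q) and τ ∈ Gal(E/K) with τ ≠ id, then z + τ(z) ∉ F_q. -/

import Mathlib

open Polynomial IsDedekindDomain

-- test aux 1: automorphism fixing X is the identity
lemma aux_fix_X {Fq : Type} [Field Fq] (σ : RatFunc Fq ≃ₐ[Fq] RatFunc Fq)
    (h : σ RatFunc.X = RatFunc.X) : σ = 1 := by
  have hpoly : ∀ p : Polynomial Fq,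
      σ (algebraMap (Polynomial Fq) (RatFunc Fq) p) = algebraMap (Polynomial Fq) (RatFunc Fq) p := by
    intro p
    have key : (σ.toAlgHom.comp (IsScalarTower.toAlgHom Fq (Polynomial Fq) (RatFunc Fq)))
        = IsScalarTower.toAlgHom Fq (Polynomial Fq) (RatFunc Fq) := by
      apply Polynomial.algHom_ext
      simpa using h
    have := DFunLike.congr_fun key p
    simpa using this
  ext w
  show σ w = w
  conv_lhs => rw [← RatFunc.num_div_denom w]
  rw [map_div₀, hpoly, hpoly, RatFunc.num_div_denom]

-- test aux 2
lemma aux_mem_range {Fq : Type} [Field Fq] (w : RatFunc Fq)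
    (h : ∀ v : HeightOneSpectrum (Polynomial Fq), v.valuation (RatFunc Fq) w ≤ 1) :
    ∃ p : Polynomial Fq, algebraMap (Polynomial Fq) (RatFunc Fq) p = w := by
  refine ⟨w.num, ?_⟩
  suffices hd : w.denom = 1 by
    have h2 := RatFunc.num_div_denom w
    rwa [hd, map_one, div_one] at h2
  by_contra hd1
  have hdm := RatFunc.monic_denom w
  have hdne : w.denom ≠ 0 := RatFunc.denom_ne_zero w
  have hnu : ¬ IsUnit w.denom := fun hu => hd1 (hdm.eq_one_of_isUnit hu)
  obtain ⟨π, hπirr, hπdvd⟩ := WfDvdMonoid.exists_irreducible_factor hnu hdne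
  have hπ0 : π ≠ 0 := hπirr.ne_zero
  have hprime : Prime π := hπirr.prime
  let v : HeightOneSpectrum (Polynomial Fq) :=
    ⟨Ideal.span {π}, (Ideal.span_singleton_prime hπ0).mpr hprime,
      by simp [Ne, Ideal.span_singleton_eq_bot, hπ0]⟩
  have hvd : v.intValuationDef w.denom < 1 := by
    rw [← HeightOneSpectrum.intValuation_apply, HeightOneSpectrum.intValuation_lt_one_iff_dvd]
    exact span_singleton_dvd_span_singleton_iff_dvd.mpr hπdvd
  have hvn : v.intValuationDef w.num = 1 := by
    rcases lt_or_eq_of_le (v.intValuation_le_one w.num) with hlt | heq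
    · exfalso
      rw [HeightOneSpectrum.intValuation_lt_one_iff_dvd] at hlt
      have : π ∣ w.num := span_singleton_dvd_span_singleton_iff_dvd.mp hlt
      exact hπirr.not_isUnit ((RatFunc.isCoprime_num_denom w).isUnit_of_dvd' this hπdvd)
    · exact heq
  have hv := h v
  rw [← RatFunc.num_div_denom w, map_div₀, HeightOneSpectrum.valuation_of_algebraMap,
    HeightOneSpectrum.valuation_of_algebraMap, HeightOneSpectrum.intValuation_apply,
    HeightOneSpectrum.intValuation_apply] at hv
  have hvd0 : (0 : WithZero (Multiplicative ℤ)) < v.intValuationDef w.denom := by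
    rw [zero_lt_iff]
    exact v.intValuation_ne_zero _ hdne
  rw [div_le_one₀ hvd0, hvn] at hv
  exact absurd (lt_of_le_of_lt hv hvd) (lt_irrefl _)

lemma aux_not_le : ¬ (((Multiplicative.ofAdd (1 : ℤ) : Multiplicative ℤ) :
    WithZero (Multiplicative ℤ)) ≤ 1) := by
  rw [← WithZero.coe_one, WithZero.coe_le_coe, ← ofAdd_zero, Multiplicative.ofAdd_le]
  omega

/-- Lemma 3.3 of the paper. Let `q = 2^n` and let `E = F_q(u)` be the rational function
field, with a group `G = Gal(E/K)` of `F_q`-automorphisms which is cyclic of (odd)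
order `q + 1` and fixes the degree-2 place `Q` (given by an irreducible quadratic
`u^2 + au + b`), i.e. preserves the `Q`-adic valuation. If `z ∈ L(Q)` has `ν_Q(z) = -1`
(pole of order exactly 1 at `Q`; in Mathlib's multiplicative convention
`Q.valuation z = ofAdd 1`, regular at all other places including infinity) and
`τ ∈ G` with `τ ≠ id`, then `z + τ(z) ∉ F_q`. -/
theorem stmt_9 (n : ℕ) (hn : 0 < n) (Fq : Type) [Field Fq] [Fintype Fq]
    [DecidableEq Fq] [DecidableEq (RatFunc Fq)] (hq : Fintype.card Fq = 2 ^ n) (a b : Fq)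
    (hirr : Irreducible (X ^ 2 + C a * X + C b))
    (Q : HeightOneSpectrum (Polynomial Fq))
    (hQ : Q.asIdeal = Ideal.span {X ^ 2 + C a * X + C b})
    (G : Subgroup (RatFunc Fq ≃ₐ[Fq] RatFunc Fq))
    (hcyc : IsCyclic G) (hcard : Nat.card G = Fintype.card Fq + 1)
    (hfixQ : ∀ τ ∈ G, ∀ w : RatFunc Fq, Q.valuation (RatFunc Fq) (τ w) = Q.valuation (RatFunc Fq) w)
    (z : RatFunc Fq)
    (hpole : Q.valuation (RatFunc Fq) z =
      ((Multiplicative.ofAdd (1 : ℤ) : Multiplicative ℤ) : WithZero (Multiplicative ℤ)))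
    (hreg : ∀ P : HeightOneSpectrum (Polynomial Fq), P ≠ Q → P.valuation (RatFunc Fq) z ≤ 1)
    (hreginf : FunctionField.inftyValuation Fq z ≤ 1)
    (τ : RatFunc Fq ≃ₐ[Fq] RatFunc Fq) (hτG : τ ∈ G) (hτ : τ ≠ 1) :
    z + τ z ∉ Set.range (fun c : Fq => RatFunc.C c) := by
  rintro ⟨c, hc⟩
  simp only at hc
  -- notation
  set f : Polynomial Fq := X ^ 2 + C a * X + C b with hfdef
  set φ := algebraMap (Polynomial Fq) (RatFunc Fq) with hφdef
  -- basic facts about z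
  have hz0 : z ≠ 0 := by
    intro h
    rw [h, map_zero] at hpole
    exact WithZero.zero_ne_coe hpole
  have hzC : ∀ d : Fq, z ≠ RatFunc.C d := by
    intro d hzd
    have h1 : Q.valuation (RatFunc Fq) z ≤ 1 := by
      rw [hzd, ← RatFunc.algebraMap_C]
      exact Q.valuation_le_one _
    rw [hpole] at h1
    exact aux_not_le h1
  -- τ fixes z
  have hτC : ∀ d : Fq, τ (RatFunc.C d) = RatFunc.C d := fun d => τ.commutes d
  have hτz2 : τ (τ z) = z := by
    have h1 : τ z = RatFunc.C c - z := by
      rw [eq_sub_iff_add_eq, add_comm]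
      exact hc.symm
    rw [h1, map_sub, hτC, h1]
    ring
  have hmdvd : orderOf τ ∣ Nat.card G := G.orderOf_dvd_natCard hτG
  have hodd : Odd (Nat.card G) := by
    rw [hcard, hq]
    exact Even.add_one ((Nat.even_pow).mpr ⟨even_two, hn.ne'⟩)
  have hmodd : Odd (orderOf τ) := hodd.of_dvd_nat hmdvd
  have hτzz : τ z = z := by
    obtain ⟨k, hk⟩ := hmodd
    have hfix2 : ∀ j : ℕ, ((τ * τ) ^ j) z = z := by
      intro j
      induction j with
      | zero => simp
      | succ j ih =>
        rw [pow_succ, AlgEquiv.mul_apply, AlgEquiv.mul_apply, hτz2, ih]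
    have hτeq : (τ * τ) ^ (k + 1) = τ := by
      have h2 : (τ * τ) ^ (k + 1) = τ ^ (2 * k + 1) * τ := by
        rw [← sq, ← pow_mul, ← pow_succ]
        ring_nf
      rw [h2, ← hk, pow_orderOf_eq_one, one_mul]
    rw [← hτeq]
    exact hfix2 _
  -- f facts
  have hf0 : f ≠ 0 := hirr.ne_zero
  have hfmonic : f.Monic := by
    have h2 : f = X ^ 2 + (C a * X + C b) := by rw [hfdef]; ring
    rw [h2]
    exact Polynomial.monic_X_pow_add
      (lt_of_le_of_lt Polynomial.degree_linear_le (by norm_num))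
  have hfdeg : f.natDegree = 2 := by
    rw [hfdef]
    compute_degree!
  -- z * f is a polynomial g
  have hwv : ∀ v : HeightOneSpectrum (Polynomial Fq), v.valuation (RatFunc Fq) (z * φ f) ≤ 1 := by
    intro v
    rw [map_mul]
    by_cases hvQ : v = Q
    · subst hvQ
      rw [hpole, hφdef, HeightOneSpectrum.valuation_of_algebraMap,
        HeightOneSpectrum.intValuation_singleton _ hf0 hQ]
      show ((Multiplicative.ofAdd (1:ℤ) : Multiplicative ℤ) : WithZero (Multiplicative ℤ)) *
        ((Multiplicative.ofAdd (-1:ℤ) : Multiplicative ℤ) : WithZero (Multiplicative ℤ)) ≤ 1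
      rw [        ← WithZero.coe_mul, ← ofAdd_add]
      norm_num
    · exact mul_le_one' (hreg v hvQ) (v.valuation_le_one f)
  obtain ⟨g, hg⟩ := aux_mem_range (z * φ f) hwv
  have hφf0 : φ f ≠ 0 := by
    simp only [hφdef, Ne, FaithfulSMul.algebraMap_eq_zero_iff]
    exact hf0
  have hg0 : g ≠ 0 := by
    intro h0
    rw [h0, map_zero] at hg
    rcases mul_eq_zero.mp hg.symm with h | h
    · exact hz0 h
    · exact hφf0 h
  -- degree bound on g
  have hdegg : g.natDegree ≤ 2 := by
    have h1 : FunctionField.inftyValuation Fq (φ g) =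
        ((Multiplicative.ofAdd (g.natDegree : ℤ) : Multiplicative ℤ) :
          WithZero (Multiplicative ℤ)) := by
      show RatFunc.inftyValuationDef Fq (φ g) = _
      exact RatFunc.inftyValuation.polynomial Fq hg0
    have h2 : FunctionField.inftyValuation Fq (φ f) =
        ((Multiplicative.ofAdd ((2 : ℕ) : ℤ) : Multiplicative ℤ) :
          WithZero (Multiplicative ℤ)) := by
      show RatFunc.inftyValuationDef Fq (φ f) = _
      have := RatFunc.inftyValuation.polynomial Fq hf0
      rw [hfdeg] at this
      exact this
    have h3 : FunctionField.inftyValuation Fq (φ g) ≤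
        ((Multiplicative.ofAdd ((2 : ℕ) : ℤ) : Multiplicative ℤ) :
          WithZero (Multiplicative ℤ)) := by
      rw [hg, map_mul, ← h2]
      calc FunctionField.inftyValuation Fq z * FunctionField.inftyValuation Fq (φ f)
          ≤ 1 * FunctionField.inftyValuation Fq (φ f) := mul_le_mul_left hreginf _
        _ = FunctionField.inftyValuation Fq (φ f) := one_mul _
    rw [h1, WithZero.coe_le_coe, Multiplicative.ofAdd_le] at h3
    exact_mod_cast h3
  -- the quadratic polynomial P over RatFunc Fq
  set ψ := algebraMap Fq (RatFunc Fq) with hψdef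
  set P : Polynomial (RatFunc Fq) := g.map ψ - Polynomial.C z * f.map ψ with hPdef
  have hPdeg : P.natDegree ≤ 2 := by
    refine le_trans (natDegree_sub_le _ _) (max_le ?_ ?_)
    · exact le_trans natDegree_map_le hdegg
    · refine le_trans (natDegree_mul_le) ?_
      rw [natDegree_C, zero_add]
      exact le_trans natDegree_map_le (le_of_eq hfdeg)
  have hP2 : P.coeff 2 ≠ 0 := by
    rw [hPdef, coeff_sub, coeff_map, coeff_C_mul, coeff_map]
    have hf2 : f.coeff 2 = 1 := by
      have := hfmonic.coeff_natDegree
      rwa [hfdeg] at this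
    rw [hf2, map_one, mul_one]
    intro h
    exact hzC (g.coeff 2) (sub_eq_zero.mp h).symm
  have hP0 : P ≠ 0 := fun h => hP2 (by rw [h, coeff_zero])
  -- roots of P
  have hXg : Polynomial.aeval RatFunc.X g = φ g := by
    have key : (Polynomial.aeval RatFunc.X : Polynomial Fq →ₐ[Fq] RatFunc Fq)
        = IsScalarTower.toAlgHom Fq (Polynomial Fq) (RatFunc Fq) := by
      apply Polynomial.algHom_ext
      simp [RatFunc.algebraMap_X]
    have := DFunLike.congr_fun key g
    simpa [hφdef] using this
  have hXf : Polynomial.aeval RatFunc.X f = φ f := by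
    have key : (Polynomial.aeval RatFunc.X : Polynomial Fq →ₐ[Fq] RatFunc Fq)
        = IsScalarTower.toAlgHom Fq (Polynomial Fq) (RatFunc Fq) := by
      apply Polynomial.algHom_ext
      simp [RatFunc.algebraMap_X]
    have := DFunLike.congr_fun key f
    simpa [hφdef] using this
  have hbase : ∀ x : RatFunc Fq,
      Polynomial.eval x P = Polynomial.aeval x g - z * Polynomial.aeval x f := by
    intro x
    rw [hPdef, eval_sub, eval_mul, eval_C, eval_map, eval_map, aeval_def, aeval_def]
  have hXroot : ∀ σ : RatFunc Fq ≃ₐ[Fq] RatFunc Fq, σ z = z → P.IsRoot (σ RatFunc.X) := by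
    intro σ hσz
    have h0 : Polynomial.eval RatFunc.X P = 0 := by
      rw [hbase, hXg, hXf, hg]
      ring
    have h1 : Polynomial.eval (σ RatFunc.X) P = σ (Polynomial.eval RatFunc.X P) := by
      rw [hbase, hbase, map_sub, map_mul, hσz]
      rw [Polynomial.aeval_algHom_apply σ RatFunc.X g,
        Polynomial.aeval_algHom_apply σ RatFunc.X f]
    rw [IsRoot, h1, h0, map_zero]
  -- distinctness of X, τ X, τ (τ X)
  have hne1 : RatFunc.X ≠ τ RatFunc.X := fun h => hτ (aux_fix_X τ h.symm)
  have hττ1 : τ * τ ≠ 1 := by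
    intro h
    have h2 : orderOf τ ∣ 2 := orderOf_dvd_of_pow_eq_one (by rw [pow_two]; exact h)
    rcases (Nat.dvd_prime Nat.prime_two).mp h2 with h1 | h1
    · exact hτ (orderOf_eq_one_iff.mp h1)
    · rw [h1] at hmodd
      simp [Nat.odd_iff] at hmodd
  have hne2 : RatFunc.X ≠ τ (τ RatFunc.X) := by
    intro h
    exact hττ1 (aux_fix_X (τ * τ) (by rw [AlgEquiv.mul_apply]; exact h.symm))
  have hne3 : τ RatFunc.X ≠ τ (τ RatFunc.X) := fun h => hne1 (τ.injective h)
  -- counting roots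
  have hroot1 : P.IsRoot RatFunc.X := by
    have := hXroot 1 (by simp)
    simpa using this
  have hroot2 : P.IsRoot (τ RatFunc.X) := hXroot τ hτzz
  have hroot3 : P.IsRoot (τ (τ RatFunc.X)) := by
    have := hXroot (τ * τ) (by rw [AlgEquiv.mul_apply, hτzz, hτzz])
    rwa [AlgEquiv.mul_apply] at this
  have hsub : ({RatFunc.X, τ RatFunc.X, τ (τ RatFunc.X)} : Finset (RatFunc Fq)).val ⊆ P.roots := by
    intro x hx
    rw [Polynomial.mem_roots hP0]
    simp only [Finset.insert_val, Finset.singleton_val, Multiset.mem_ndinsert,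
      Multiset.mem_singleton] at hx
    rcases hx with h | h | h <;> rw [h]
    · exact hroot1
    · exact hroot2
    · exact hroot3
  have hcard3 : ({RatFunc.X, τ RatFunc.X, τ (τ RatFunc.X)} : Finset (RatFunc Fq)).card = 3 := by
    rw [Finset.card_insert_of_notMem (by simp [hne1, hne2]),
      Finset.card_insert_of_notMem (by simp [hne3]), Finset.card_singleton]
  have hfinal := Polynomial.card_le_degree_of_subset_roots hsub
  rw [hcard3] at hfinal
  omega
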